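/- arXiv:2401.09609 — 9 statements merged into one kernel-verified Lean document; each statement's English description precedes it below -/
import Mathlib

section
/- Let D ⊆ ℝⁿ be a nonempty (possibly infinite) set of nonzero vectors and let L be a linear subspace of ℝⁿ. If pspan(D) = L, then there exists a finite subset C ⊆ D such that pspan(C) = L. -/
open scoped RealInnerProductSpace

noncomputable section

/-- The positive span of a set `D`: all finite nonnegative linear combinations
of elements of `D`. -/
def pspan {E : Type*} [AddCommGroup E] [Module ℝ E] (D : Set E) : Set E :=
  {x | ∃ (k : ℕ) (d : Fin k → E) (c : Fin k → ℝ),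
    (∀ i, d i ∈ D) ∧ (∀ i, 0 ≤ c i) ∧ x = ∑ i, c i • d i}

/-- The cosine measure of `D` relative to a subspace `L`:
`min` over unit vectors `u ∈ L` of `sup_{d ∈ D} ⟪u, d⟫ / ‖d‖`. -/
noncomputable def cmRel {E : Type*} [NormedAddCommGroup E] [InnerProductSpace ℝ E]
    (L : Submodule ℝ E) (D : Set E) : ℝ :=
  sInf ((fun u => sSup ((fun d => ⟪u, d⟫ / ‖d‖) '' D)) '' {u : E | u ∈ L ∧ ‖u‖ = 1})

/-- The cosine vector set of `D` relative to a subspace `L`: the set of unit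
vectors `u ∈ L` attaining the minimum defining `cmRel L D`. -/
noncomputable def cVRel {E : Type*} [NormedAddCommGroup E] [InnerProductSpace ℝ E]
    (L : Submodule ℝ E) (D : Set E) : Set E :=
  {u : E | u ∈ L ∧ ‖u‖ = 1 ∧ sSup ((fun d => ⟪u, d⟫ / ‖d‖) '' D) = cmRel L D}

section Aux

variable {E : Type*} [AddCommGroup E] [Module ℝ E]

lemma pspan_mono {C D : Set E} (hCD : C ⊆ D) : pspan C ⊆ pspan D := by
  rintro x ⟨k, d, c, hd, hc, rfl⟩
  exact ⟨k, d, c, fun i => hCD (hd i), hc, rfl⟩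

lemma pspan_zero (D : Set E) : (0 : E) ∈ pspan D :=
  ⟨0, Fin.elim0, Fin.elim0, fun i => i.elim0, fun i => i.elim0, by simp⟩

lemma pspan_add {D : Set E} {x y : E} (hx : x ∈ pspan D) (hy : y ∈ pspan D) :
    x + y ∈ pspan D := by
  obtain ⟨k₁, d₁, c₁, hd₁, hc₁, rfl⟩ := hx
  obtain ⟨k₂, d₂, c₂, hd₂, hc₂, rfl⟩ := hy
  refine ⟨k₁ + k₂, Fin.append d₁ d₂, Fin.append c₁ c₂, ?_, ?_, ?_⟩
  · intro i
    refine Fin.addCases (fun j => ?_) (fun j => ?_) i <;>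
      simp [Fin.append_left, Fin.append_right, hd₁, hd₂]
  · intro i
    refine Fin.addCases (fun j => ?_) (fun j => ?_) i <;>
      simp [Fin.append_left, Fin.append_right, hc₁, hc₂]
  · rw [Fin.sum_univ_add]
    simp [Fin.append_left, Fin.append_right]

lemma pspan_smul {D : Set E} {r : ℝ} (hr : 0 ≤ r) {x : E} (hx : x ∈ pspan D) :
    r • x ∈ pspan D := by
  obtain ⟨k, d, c, hd, hc, rfl⟩ := hx
  exact ⟨k, d, fun i => r * c i, hd, fun i => mul_nonneg hr (hc i), by
    rw [Finset.smul_sum]; simp [smul_smul]⟩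

end Aux

theorem stmt1 {n : ℕ} (D : Set (EuclideanSpace ℝ (Fin n))) (hne : D.Nonempty)
    (h0 : (0 : EuclideanSpace ℝ (Fin n)) ∉ D)
    (L : Submodule ℝ (EuclideanSpace ℝ (Fin n)))
    (h : pspan D = (L : Set (EuclideanSpace ℝ (Fin n)))) :
    ∃ C : Set (EuclideanSpace ℝ (Fin n)), C ⊆ D ∧ C.Finite ∧
      pspan C = (L : Set (EuclideanSpace ℝ (Fin n))) := by
  obtain ⟨S, hS⟩ : L.FG := IsNoetherian.noetherian L
  have key : ∀ x : EuclideanSpace ℝ (Fin n), x ∈ (L : Set (EuclideanSpace ℝ (Fin n))) →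
      ∃ C : Set (EuclideanSpace ℝ (Fin n)), C ⊆ D ∧ C.Finite ∧ x ∈ pspan C := by
    intro x hx
    rw [← h] at hx
    obtain ⟨k, d, c, hd, hc, rfl⟩ := hx
    exact ⟨Set.range d, Set.range_subset_iff.2 hd, Set.finite_range d,
      k, d, c, fun i => Set.mem_range_self i, hc, rfl⟩
  classical
  choose! f hf1 hf2 hf3 using key
  set g : EuclideanSpace ℝ (Fin n) → Set (EuclideanSpace ℝ (Fin n)) :=
    fun v => if v ∈ (L : Set (EuclideanSpace ℝ (Fin n))) then f v else ∅ with hg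
  have hg1 : ∀ v, g v ⊆ D := by
    intro v
    by_cases hv : v ∈ (L : Set (EuclideanSpace ℝ (Fin n)))
    · simp only [hg, if_pos hv]; exact hf1 v hv
    · simp only [hg, if_neg hv]; exact Set.empty_subset _
  have hg2 : ∀ v, (g v).Finite := by
    intro v
    by_cases hv : v ∈ (L : Set (EuclideanSpace ℝ (Fin n)))
    · simp only [hg, if_pos hv]; exact hf2 v hv
    · simp only [hg, if_neg hv]; exact Set.finite_empty
  have hg3 : ∀ v, v ∈ (L : Set (EuclideanSpace ℝ (Fin n))) → v ∈ pspan (g v) := by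
    intro v hv
    simp only [hg, if_pos hv]
    exact hf3 v hv
  set C : Set (EuclideanSpace ℝ (Fin n)) := ⋃ v ∈ (S : Set (EuclideanSpace ℝ (Fin n))),
    (g v ∪ g (-v)) with hC
  have hCD : C ⊆ D := by
    simp only [hC, Set.iUnion_subset_iff]
    intro v _
    exact Set.union_subset (hg1 v) (hg1 (-v))
  have hCfin : C.Finite :=
    Set.Finite.biUnion S.finite_toSet (fun v _ => (hg2 v).union (hg2 (-v)))
  have hsub : pspan C ⊆ (L : Set (EuclideanSpace ℝ (Fin n))) := h ▸ pspan_mono hCD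
  have hSL : (S : Set (EuclideanSpace ℝ (Fin n))) ⊆ (L : Set (EuclideanSpace ℝ (Fin n))) := by
    rw [← hS]; exact Submodule.subset_span
  have hmemC : ∀ v ∈ (S : Set (EuclideanSpace ℝ (Fin n))), v ∈ pspan C ∧ -v ∈ pspan C := by
    intro v hv
    have hvL : v ∈ (L : Set (EuclideanSpace ℝ (Fin n))) := hSL hv
    have hnvL : -v ∈ (L : Set (EuclideanSpace ℝ (Fin n))) := L.neg_mem hvL
    constructor
    · exact pspan_mono (le_trans (Set.subset_union_left)
        (Set.subset_biUnion_of_mem (u := fun w => g w ∪ g (-w)) hv)) (hg3 v hvL)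
    · exact pspan_mono (le_trans (Set.subset_union_right)
        (Set.subset_biUnion_of_mem (u := fun w => g w ∪ g (-w)) hv)) (hg3 (-v) hnvL)
  let M : Submodule ℝ (EuclideanSpace ℝ (Fin n)) :=
  { carrier := {x | x ∈ pspan C ∧ -x ∈ pspan C}
    add_mem' := fun ⟨a1, a2⟩ ⟨b1, b2⟩ =>
      ⟨pspan_add a1 b1, by rw [neg_add]; exact pspan_add a2 b2⟩
    zero_mem' := ⟨pspan_zero C, by rw [neg_zero]; exact pspan_zero C⟩
    smul_mem' := by
      rintro r x ⟨h1, h2⟩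
      rcases le_or_gt 0 r with hr | hr
      · exact ⟨pspan_smul hr h1, by rw [← smul_neg]; exact pspan_smul hr h2⟩
      · constructor
        · have : r • x = (-r) • (-x) := by simp
          rw [this]; exact pspan_smul (by linarith) h2
        · have : -(r • x) = (-r) • x := by simp
          rw [this]; exact pspan_smul (by linarith) h1 }
  have hLM : L ≤ M := by
    rw [← hS, Submodule.span_le]
    intro v hv
    exact hmemC v hv
  refine ⟨C, hCD, hCfin, Set.Subset.antisymm hsub ?_⟩
  intro x hx
  exact (hLM hx).1
end
end

section
/- Let D ⊆ ℝⁿ be an infinite set of vectors. If D is positively independent, then pspan(D) ≠ span(D). -/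
open scoped RealInnerProductSpace

noncomputable section

section aux

variable {E : Type*} [AddCommGroup E] [Module ℝ E] {D D' : Set E}

lemma zero_mem_pspan : (0 : E) ∈ pspan D :=
  ⟨0, Fin.elim0, Fin.elim0, fun i => i.elim0, fun i => i.elim0, by simp⟩

lemma mem_pspan {d : E} (hd : d ∈ D) : d ∈ pspan D :=
  ⟨1, fun _ => d, fun _ => 1, fun _ => hd, fun _ => zero_le_one, by simp⟩

lemma pspan_mono_s2 (h : D ⊆ D') : pspan D ⊆ pspan D' := by
  rintro x ⟨k, d, c, hd, hc, hx⟩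
  exact ⟨k, d, c, fun i => h (hd i), hc, hx⟩

lemma add_mem_pspan {x y : E} (hx : x ∈ pspan D) (hy : y ∈ pspan D) :
    x + y ∈ pspan D := by
  obtain ⟨k, d, c, hd, hc, hxe⟩ := hx
  obtain ⟨m, e, g, he, hg, hye⟩ := hy
  refine ⟨k + m, Fin.append d e, Fin.append c g, ?_, ?_, ?_⟩
  · intro i
    refine Fin.addCases (fun j => ?_) (fun j => ?_) i
    · simpa [Fin.append_left] using hd j
    · simpa [Fin.append_right] using he j
  · intro i
    refine Fin.addCases (fun j => ?_) (fun j => ?_) i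
    · simpa [Fin.append_left] using hc j
    · simpa [Fin.append_right] using hg j
  · rw [Fin.sum_univ_add]
    simp only [Fin.append_left, Fin.append_right]
    rw [hxe, hye]

lemma smul_mem_pspan {t : ℝ} (ht : 0 ≤ t) {x : E} (hx : x ∈ pspan D) :
    t • x ∈ pspan D := by
  obtain ⟨k, d, c, hd, hc, hxe⟩ := hx
  refine ⟨k, d, fun i => t * c i, hd, fun i => mul_nonneg ht (hc i), ?_⟩
  rw [hxe, Finset.smul_sum]
  simp [smul_smul]

lemma sum_mem_pspan {ι : Type*} (s : Finset ι) (f : ι → E)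
    (h : ∀ i ∈ s, f i ∈ pspan D) : (∑ i ∈ s, f i) ∈ pspan D := by
  classical
  induction s using Finset.induction with
  | empty => simpa using zero_mem_pspan
  | @insert _ _ hi ih =>
    rw [Finset.sum_insert hi]
    exact add_mem_pspan (h _ (Finset.mem_insert_self _ _))
      (ih fun i hi' => h i (Finset.mem_insert_of_mem hi'))

lemma pspan_subset_pspan (h : D ⊆ pspan D') : pspan D ⊆ pspan D' := by
  rintro x ⟨k, d, c, hd, hc, hx⟩
  rw [hx]
  exact sum_mem_pspan _ _ fun i _ => smul_mem_pspan (hc i) (h (hd i))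

lemma exists_finset_of_mem_pspan {x : E} (hx : x ∈ pspan D) :
    ∃ F : Finset E, ↑F ⊆ D ∧ x ∈ pspan (↑F : Set E) := by
  classical
  obtain ⟨k, d, c, hd, hc, hxe⟩ := hx
  refine ⟨Finset.image d Finset.univ, ?_, k, d, c, ?_, hc, hxe⟩
  · intro y hy
    simp only [Finset.coe_image, Set.mem_image] at hy
    obtain ⟨i, _, rfl⟩ := hy
    exact hd i
  · intro i
    simp

/-- If both `x` and `-x` lie in `pspan F` for all generators, we get a submodule. -/
def pspanSym (F : Set E) : Submodule ℝ E where
  carrier := {x | x ∈ pspan F ∧ -x ∈ pspan F}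
  zero_mem' := ⟨zero_mem_pspan, by simpa using (zero_mem_pspan : (0:E) ∈ pspan F)⟩
  add_mem' := fun hx hy =>
    ⟨add_mem_pspan hx.1 hy.1, by
      rw [neg_add]; exact add_mem_pspan hx.2 hy.2⟩
  smul_mem' := by
    intro t x hx
    rcases le_or_gt 0 t with ht | ht
    · exact ⟨smul_mem_pspan ht hx.1, by
        rw [← smul_neg]; exact smul_mem_pspan ht hx.2⟩
    · have ht' : 0 ≤ -t := by linarith
      constructor
      · have : t • x = (-t) • (-x) := by simp
        rw [this]; exact smul_mem_pspan ht' hx.2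
      · have : -(t • x) = (-t) • x := by simp
        rw [this]; exact smul_mem_pspan ht' hx.1

end aux


theorem stmt2 {n : ℕ} (D : Set (EuclideanSpace ℝ (Fin n))) (hinf : D.Infinite)
    (hpi : ∀ d ∈ D, pspan (D \ {d}) ≠ pspan D) :
    pspan D ≠ (Submodule.span ℝ D : Set (EuclideanSpace ℝ (Fin n))) := by
  classical
  intro h
  -- the span is finitely generated
  obtain ⟨S, hS⟩ : (Submodule.span ℝ D).FG := IsNoetherian.noetherian _
  -- the finite symmetric generating set
  set T : Finset (EuclideanSpace ℝ (Fin n)) := S ∪ S.image (fun x => -x) with hT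
  have hTspan : ∀ t ∈ T, t ∈ (Submodule.span ℝ D : Set (EuclideanSpace ℝ (Fin n))) := by
    intro t ht
    rw [hT, Finset.mem_union] at ht
    rcases ht with ht | ht
    · rw [← hS]; exact Submodule.subset_span ht
    · obtain ⟨s, hs, rfl⟩ := Finset.mem_image.mp ht
      rw [← hS]
      exact Submodule.neg_mem _ (Submodule.subset_span hs)
  -- each t ∈ T lies in pspan of a finite subset of D
  have hTp : ∀ t ∈ T, ∃ F : Finset (EuclideanSpace ℝ (Fin n)), ↑F ⊆ D ∧ t ∈ pspan (↑F : Set (EuclideanSpace ℝ (Fin n))) := by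
    intro t ht
    exact exists_finset_of_mem_pspan (by rw [h]; exact hTspan t ht)
  choose! φ hφD hφp using hTp
  set F : Finset (EuclideanSpace ℝ (Fin n)) := T.biUnion φ with hF
  have hFD : (↑F : Set (EuclideanSpace ℝ (Fin n))) ⊆ D := by
    intro x hx
    simp only [hF, Finset.coe_biUnion, Set.mem_iUnion] at hx
    obtain ⟨t, ht, hx⟩ := hx
    exact hφD t (by simpa using ht) hx
  have hTF : ∀ t ∈ T, t ∈ pspan (↑F : Set (EuclideanSpace ℝ (Fin n))) := by
    intro t ht
    refine pspan_mono_s2 ?_ (hφp t ht)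
    intro x hx
    simp only [hF, Finset.coe_biUnion, Set.mem_iUnion]
    exact ⟨t, by simpa using ht, hx⟩
  -- span D ≤ pspanSym F
  have hDM : ∀ x ∈ D, x ∈ pspan (↑F : Set (EuclideanSpace ℝ (Fin n))) := by
    have hspan : Submodule.span ℝ D ≤ pspanSym (↑F : Set (EuclideanSpace ℝ (Fin n))) := by
      rw [← hS]
      rw [Submodule.span_le]
      intro s hs
      refine ⟨hTF s ?_, hTF (-s) ?_⟩
      · exact Finset.mem_union_left _ hs
      · exact Finset.mem_union_right _ (Finset.mem_image_of_mem _ hs)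
    intro x hx
    exact (hspan (Submodule.subset_span hx)).1
  -- pick d ∈ D outside F
  obtain ⟨d, hdD, hdF⟩ : ∃ d ∈ D, d ∉ (↑F : Set (EuclideanSpace ℝ (Fin n))) := by
    have := (hinf.diff (F.finite_toSet)).nonempty
    obtain ⟨d, hd⟩ := this
    exact ⟨d, hd.1, hd.2⟩
  refine hpi d hdD (Set.Subset.antisymm (pspan_mono_s2 Set.diff_subset) ?_)
  refine pspan_subset_pspan ?_
  intro e he
  by_cases hed : e = d
  · subst hed
    refine pspan_mono_s2 ?_ (hDM e he)
    intro x hx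
    exact ⟨hFD hx, fun hxe => hdF (by rwa [hxe] at hx)⟩
  · exact mem_pspan ⟨he, hed⟩
end
end

section
/- Let D = {d₁, …, d_s} ⊆ ℝⁿ be a finite set of s ≥ 2 nonzero vectors. Then the following are equivalent: (a) pspan(D) = span(D); (b) there exist real numbers α₁, …, α_s with αᵢ > 0 for all i and ∑ᵢ αᵢ dᵢ = 0; (c) there exist real numbers β₁, …, β_s with βᵢ ≥ 1 for all i and ∑ᵢ βᵢ dᵢ = 0; (d) there exist real numbers γ₁, …, γ_s with γᵢ ≥ 0 for all i and ∑ᵢ γᵢ dᵢ = −∑ᵢ dᵢ. -/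
open scoped RealInnerProductSpace

noncomputable section

lemma mem_pspan_iff {E : Type*} [AddCommGroup E] [Module ℝ E] {s : ℕ}
    (d : Fin s → E) (x : E) :
    x ∈ pspan (Set.range d) ↔ ∃ c : Fin s → ℝ, (∀ i, 0 ≤ c i) ∧ x = ∑ i, c i • d i := by
  constructor
  · rintro ⟨k, e, c, he, hc, rfl⟩
    choose f hf using he
    refine ⟨fun i => ∑ j ∈ Finset.univ.filter (fun j => f j = i), c j,
      fun i => Finset.sum_nonneg fun j _ => hc j, ?_⟩
    rw [← Finset.sum_fiberwise Finset.univ f (fun j => c j • e j)]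
    refine Finset.sum_congr rfl fun i _ => ?_
    rw [Finset.sum_smul]
    refine Finset.sum_congr rfl fun j hj => ?_
    rw [Finset.mem_filter] at hj
    rw [← hf j, hj.2]
  · rintro ⟨c, hc, rfl⟩
    exact ⟨s, d, c, fun i => ⟨i, rfl⟩, hc, rfl⟩

theorem stmt4 {n s : ℕ} (hs : 2 ≤ s) (d : Fin s → EuclideanSpace ℝ (Fin n))
    (hinj : Function.Injective d) (h0 : ∀ i, d i ≠ 0) :
    ((pspan (Set.range d) =
        (Submodule.span ℝ (Set.range d) : Set (EuclideanSpace ℝ (Fin n)))) ↔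
      (∃ α : Fin s → ℝ, (∀ i, 0 < α i) ∧ ∑ i, α i • d i = 0)) ∧
    ((pspan (Set.range d) =
        (Submodule.span ℝ (Set.range d) : Set (EuclideanSpace ℝ (Fin n)))) ↔
      (∃ β : Fin s → ℝ, (∀ i, 1 ≤ β i) ∧ ∑ i, β i • d i = 0)) ∧
    ((pspan (Set.range d) =
        (Submodule.span ℝ (Set.range d) : Set (EuclideanSpace ℝ (Fin n)))) ↔
      (∃ γ : Fin s → ℝ, (∀ i, 0 ≤ γ i) ∧ ∑ i, γ i • d i = -∑ i, d i)) := by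
  have hne : Nonempty (Fin s) := ⟨⟨0, by omega⟩⟩
  -- (d) → (b)
  have hdb : (∃ γ : Fin s → ℝ, (∀ i, 0 ≤ γ i) ∧ ∑ i, γ i • d i = -∑ i, d i) →
      ∃ α : Fin s → ℝ, (∀ i, 0 < α i) ∧ ∑ i, α i • d i = 0 := by
    rintro ⟨γ, hγ, hsum⟩
    refine ⟨fun i => γ i + 1, fun i => by dsimp only; linarith [hγ i], ?_⟩
    simp only [add_smul, one_smul, Finset.sum_add_distrib, hsum]
    simp
  -- (b) → (c)
  have hbc : (∃ α : Fin s → ℝ, (∀ i, 0 < α i) ∧ ∑ i, α i • d i = 0) →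
      ∃ β : Fin s → ℝ, (∀ i, 1 ≤ β i) ∧ ∑ i, β i • d i = 0 := by
    rintro ⟨α, hα, hsum⟩
    set m := Finset.univ.inf' (Finset.univ_nonempty) α with hm
    have hmpos : 0 < m := by
      rw [hm, Finset.lt_inf'_iff]
      exact fun i _ => hα i
    refine ⟨fun i => α i / m, fun i => ?_, ?_⟩
    · rw [le_div_iff₀ hmpos, one_mul]
      exact Finset.inf'_le α (Finset.mem_univ i)
    · have : ∑ i, (α i / m) • d i = (m⁻¹) • ∑ i, α i • d i := by
        rw [Finset.smul_sum]
        refine Finset.sum_congr rfl fun i _ => ?_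
        rw [smul_smul, div_eq_inv_mul]
      rw [this, hsum, smul_zero]
  -- (c) → (d)
  have hcd : (∃ β : Fin s → ℝ, (∀ i, 1 ≤ β i) ∧ ∑ i, β i • d i = 0) →
      ∃ γ : Fin s → ℝ, (∀ i, 0 ≤ γ i) ∧ ∑ i, γ i • d i = -∑ i, d i := by
    rintro ⟨β, hβ, hsum⟩
    refine ⟨fun i => β i - 1, fun i => by dsimp only; linarith [hβ i], ?_⟩
    simp only [sub_smul, one_smul, Finset.sum_sub_distrib, hsum]
    simp
  -- (b) → (a)
  have hba : (∃ α : Fin s → ℝ, (∀ i, 0 < α i) ∧ ∑ i, α i • d i = 0) →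
      pspan (Set.range d) =
        (Submodule.span ℝ (Set.range d) : Set (EuclideanSpace ℝ (Fin n))) := by
    rintro ⟨α, hα, hsum⟩
    apply Set.Subset.antisymm
    · rintro x hx
      rw [mem_pspan_iff] at hx
      obtain ⟨c, hc, rfl⟩ := hx
      exact Submodule.sum_mem _ fun i _ =>
        Submodule.smul_mem _ _ (Submodule.subset_span ⟨i, rfl⟩)
    · intro x hx
      have hx' : x ∈ Submodule.span ℝ (Set.range d) := hx
      obtain ⟨c, hc⟩ := (Submodule.mem_span_range_iff_exists_fun ℝ).mp hx'
      set t : ℝ := ∑ j, |c j| / α j with ht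
      have htα : ∀ i, |c i| ≤ t * α i := by
        intro i
        have h1 : |c i| / α i ≤ t :=
          Finset.single_le_sum (f := fun j => |c j| / α j)
            (fun j _ => div_nonneg (abs_nonneg _) (hα j).le) (Finset.mem_univ i)
        calc |c i| = (|c i| / α i) * α i := (div_mul_cancel₀ _ (hα i).ne').symm
          _ ≤ t * α i := mul_le_mul_of_nonneg_right h1 (hα i).le
      rw [mem_pspan_iff]
      refine ⟨fun i => c i + t * α i, fun i => ?_, ?_⟩
      · have := htα i
        have := neg_abs_le (c i)
        dsimp only
        linarith
      · have : ∑ i, (c i + t * α i) • d i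
            = (∑ i, c i • d i) + t • (∑ i, α i • d i) := by
          rw [Finset.smul_sum, ← Finset.sum_add_distrib]
          refine Finset.sum_congr rfl fun i _ => ?_
          rw [add_smul, smul_smul]
        rw [this, hsum, smul_zero, add_zero, hc]
  -- (a) → (d)
  have had : pspan (Set.range d) =
        (Submodule.span ℝ (Set.range d) : Set (EuclideanSpace ℝ (Fin n))) →
      ∃ γ : Fin s → ℝ, (∀ i, 0 ≤ γ i) ∧ ∑ i, γ i • d i = -∑ i, d i := by
    intro ha
    have hmem : (-∑ i, d i) ∈ (Submodule.span ℝ (Set.range d) :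
        Set (EuclideanSpace ℝ (Fin n))) := by
      exact Submodule.neg_mem _ (Submodule.sum_mem _ fun i _ =>
        Submodule.subset_span ⟨i, rfl⟩)
    rw [← ha, mem_pspan_iff] at hmem
    obtain ⟨c, hc, hrep⟩ := hmem
    exact ⟨c, hc, hrep.symm⟩
  refine ⟨⟨fun ha => hdb (had ha), hba⟩,
    ⟨fun ha => hbc (hdb (had ha)), fun hc => hba (hdb (hcd hc))⟩,
    ⟨fun ha => had ha, fun hd => hba (hdb hd)⟩⟩
end
end

section
/- Let D ⊆ ℝⁿ be a nonempty (possibly infinite) set of nonzero vectors, let m = dim(span(D)), and let B = {b₁, …, b_m} ⊆ D be a basis of span(D). Define w = −(b₁ + ⋯ + b_m). Then (i) pspan(D ∪ {w}) = span(D), and (ii) pspan(D ∪ (−B)) = span(D), where −B = {−b₁, …, −b_m}. -/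
open scoped RealInnerProductSpace

noncomputable section

lemma pspan_subset_span {E : Type*} [AddCommGroup E] [Module ℝ E] {S T : Set E}
    (hST : S ⊆ (Submodule.span ℝ T : Set E)) :
    pspan S ⊆ (Submodule.span ℝ T : Set E) := by
  rintro x ⟨k, d, c, hd, _, rfl⟩
  exact Submodule.sum_mem _ fun i _ => Submodule.smul_mem _ _ (hST (hd i))

theorem stmt5 {n m : ℕ} (D : Set (EuclideanSpace ℝ (Fin n))) (hne : D.Nonempty)
    (h0 : (0 : EuclideanSpace ℝ (Fin n)) ∉ D)
    (b : Fin m → EuclideanSpace ℝ (Fin n)) (hbD : ∀ i, b i ∈ D)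
    (hli : LinearIndependent ℝ b)
    (hspan : Submodule.span ℝ (Set.range b) = Submodule.span ℝ D)
    (hm : m = Module.finrank ℝ (Submodule.span ℝ D)) :
    pspan (D ∪ {-(∑ i, b i)}) =
      (Submodule.span ℝ D : Set (EuclideanSpace ℝ (Fin n))) ∧
    pspan (D ∪ Set.range fun i => -(b i)) =
      (Submodule.span ℝ D : Set (EuclideanSpace ℝ (Fin n))) := by
  have hb_mem : ∀ i, b i ∈ Submodule.span ℝ D := fun i =>
    Submodule.subset_span (hbD i)
  constructor
  · apply Set.Subset.antisymm
    · apply pspan_subset_span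
      rintro x (hx | hx)
      · exact Submodule.subset_span hx
      · rcases hx with rfl
        exact Submodule.neg_mem _ (Submodule.sum_mem _ fun i _ => hb_mem i)
    · intro x hx
      rw [← hspan] at hx
      obtain ⟨c, rfl⟩ := (Submodule.mem_span_range_iff_exists_fun ℝ).mp hx
      set t : ℝ := ∑ i, |c i| with ht
      have ht0 : 0 ≤ t := Finset.sum_nonneg fun i _ => abs_nonneg _
      have htc : ∀ i, 0 ≤ c i + t := by
        intro i
        have h1 : |c i| ≤ t := Finset.single_le_sum
          (f := fun i => |c i|) (fun j _ => abs_nonneg _) (Finset.mem_univ i)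
        have := neg_abs_le (c i)
        linarith
      refine ⟨m + 1, Fin.snoc b (-(∑ i, b i)), Fin.snoc (fun i => c i + t) t,
        ?_, ?_, ?_⟩
      · intro i
        refine Fin.lastCases ?_ ?_ i
        · simp
        · intro j; simp [hbD j]
      · intro i
        refine Fin.lastCases ?_ ?_ i
        · simpa using ht0
        · intro j; simpa using htc j
      · rw [Fin.sum_univ_castSucc]
        simp only [Fin.snoc_last, Fin.snoc_castSucc]
        rw [smul_neg, Finset.smul_sum, ← sub_eq_add_neg, ← Finset.sum_sub_distrib]
        refine Finset.sum_congr rfl fun i _ => ?_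
        rw [add_smul]
        abel
  · apply Set.Subset.antisymm
    · apply pspan_subset_span
      rintro x (hx | ⟨i, rfl⟩)
      · exact Submodule.subset_span hx
      · exact Submodule.neg_mem _ (hb_mem i)
    · intro x hx
      rw [← hspan] at hx
      obtain ⟨c, rfl⟩ := (Submodule.mem_span_range_iff_exists_fun ℝ).mp hx
      refine ⟨m + m, Fin.addCases b (fun i => -(b i)),
        Fin.addCases (fun i => max (c i) 0) (fun i => max (-(c i)) 0),
        ?_, ?_, ?_⟩
      · intro i
        refine Fin.addCases ?_ ?_ i
        · intro j; simp [hbD j]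
        · intro j
          simp only [Fin.addCases_right]
          exact Or.inr ⟨j, rfl⟩
      · intro i
        refine Fin.addCases ?_ ?_ i
        · intro j; simp [le_max_right]
        · intro j
          simp only [Fin.addCases_right]
          exact le_max_right _ _
      · rw [Fin.sum_univ_add]
        simp only [Fin.addCases_left, Fin.addCases_right]
        rw [← Finset.sum_add_distrib]
        refine Finset.sum_congr rfl fun i _ => ?_
        rw [smul_neg, ← sub_eq_add_neg, ← sub_smul]
        congr 1
        rcases le_total (c i) 0 with h | h
        · rw [max_eq_right h, max_eq_left (by linarith)]; ring
        · rw [max_eq_left h, max_eq_right (by linarith)]; ring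
end
end

section
/- Let D ⊆ ℝⁿ be a nonempty finite set of nonzero vectors and let L ⊆ ℝⁿ be a nontrivial linear subspace. Then CM(D) ≤ CM_L(D), with equality if and only if cV(D) ∩ L ≠ ∅. -/
open scoped RealInnerProductSpace

noncomputable section

theorem stmt9 {n : ℕ} (D : Set (EuclideanSpace ℝ (Fin n))) (hne : D.Nonempty)
    (hfin : D.Finite) (h0 : (0 : EuclideanSpace ℝ (Fin n)) ∉ D)
    (L : Submodule ℝ (EuclideanSpace ℝ (Fin n))) (hL : L ≠ ⊥) :
    cmRel (⊤ : Submodule ℝ (EuclideanSpace ℝ (Fin n))) D ≤ cmRel L D ∧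
    (cmRel (⊤ : Submodule ℝ (EuclideanSpace ℝ (Fin n))) D = cmRel L D ↔
      (cVRel (⊤ : Submodule ℝ (EuclideanSpace ℝ (Fin n))) D ∩
        (L : Set (EuclideanSpace ℝ (Fin n)))).Nonempty) := by
  set f : EuclideanSpace ℝ (Fin n) → ℝ := fun u => sSup ((fun d => ⟪u, d⟫ / ‖d‖) '' D)
    with hf
  have hsne : hfin.toFinset.Nonempty := Set.Finite.toFinset_nonempty hfin |>.2 hne
  have hfeq : ∀ u, f u = hfin.toFinset.sup' hsne (fun d => ⟪u, d⟫ / ‖d‖) := by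
    intro u
    rw [Finset.sup'_eq_csSup_image, Set.Finite.coe_toFinset]
  have hcont : Continuous f := by
    have : Continuous (fun u : EuclideanSpace ℝ (Fin n) =>
        hfin.toFinset.sup' hsne (fun d => ⟪u, d⟫ / ‖d‖)) := by
      apply Continuous.finset_sup'_apply hsne
      intro d _
      exact ((continuous_id.inner continuous_const)).div_const _
    simpa [funext hfeq] using this
  -- lower bound on f for unit vectors
  have hlb : ∀ u : EuclideanSpace ℝ (Fin n), ‖u‖ = 1 → -1 ≤ f u := by
    intro u hu
    obtain ⟨d, hd⟩ := hne
    have hdne : d ≠ 0 := fun h => h0 (h ▸ hd)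
    have hdpos : (0:ℝ) < ‖d‖ := norm_pos_iff.2 hdne
    have h1 : -1 ≤ ⟪u, d⟫ / ‖d‖ := by
      rw [le_div_iff₀ hdpos]
      have := abs_real_inner_le_norm u d
      rw [hu, one_mul] at this
      linarith [neg_abs_le ⟪u, d⟫]
    refine h1.trans ?_
    rw [hfeq u]
    exact Finset.le_sup' (fun d => ⟪u, d⟫ / ‖d‖) (hfin.mem_toFinset.2 hd)
  -- sets of unit vectors
  set ST : Set (EuclideanSpace ℝ (Fin n)) :=
    {u | u ∈ (⊤ : Submodule ℝ (EuclideanSpace ℝ (Fin n))) ∧ ‖u‖ = 1} with hST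
  set SL : Set (EuclideanSpace ℝ (Fin n)) := {u | u ∈ L ∧ ‖u‖ = 1} with hSL
  have hsub : SL ⊆ ST := fun u hu => ⟨trivial, hu.2⟩
  have hSLne : SL.Nonempty := by
    obtain ⟨x, hxL, hx0⟩ := Submodule.exists_mem_ne_zero_of_ne_bot hL
    refine ⟨‖x‖⁻¹ • x, L.smul_mem _ hxL, ?_⟩
    rw [norm_smul, norm_inv, norm_norm, inv_mul_cancel₀ (norm_ne_zero_iff.2 hx0)]
  have hbdd : BddBelow (f '' ST) := by
    refine ⟨-1, fun y hy => ?_⟩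
    obtain ⟨u, hu, rfl⟩ := hy
    exact hlb u hu.2
  have hbddL : BddBelow (f '' SL) := hbdd.mono (Set.image_mono (f := f) hsub)
  have hineq : cmRel (⊤ : Submodule ℝ (EuclideanSpace ℝ (Fin n))) D ≤ cmRel L D :=
    csInf_le_csInf hbdd (hSLne.image f) (Set.image_mono (f := f) hsub)
  -- compactness of SL and attainment
  have hSLcl : IsClosed SL := by
    have : SL = (L : Set (EuclideanSpace ℝ (Fin n))) ∩ Metric.sphere 0 1 := by
      ext u
      simp [hSL, Set.mem_inter_iff, mem_sphere_iff_norm]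
    rw [this]
    exact L.closed_of_finiteDimensional.inter Metric.isClosed_sphere
  have hSLcp : IsCompact SL := by
    refine IsCompact.of_isClosed_subset (isCompact_sphere 0 1) hSLcl ?_
    intro u hu
    simpa [mem_sphere_iff_norm] using hu.2
  have hattain : cmRel L D ∈ f '' SL :=
    IsCompact.sInf_mem (hSLcp.image hcont) (hSLne.image f)
  refine ⟨hineq, ?_, ?_⟩
  · intro heq
    obtain ⟨u, huSL, hufu⟩ := hattain
    exact ⟨u, ⟨trivial, huSL.2, hufu.trans heq.symm⟩, huSL.1⟩
  · rintro ⟨u, ⟨-, hu1, hfu⟩, huL⟩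
    refine le_antisymm hineq ?_
    exact (csInf_le hbddL ⟨u, ⟨huL, hu1⟩, rfl⟩ : cmRel L D ≤ f u).trans_eq hfu
end
end

section
/- Let D ⊆ ℝⁿ be a nonempty finite set of nonzero vectors with span(D) ≠ ℝⁿ. If pspan(D) = span(D), then CM(D) = 0. -/
open scoped RealInnerProductSpace

noncomputable section

theorem stmt11 {n : ℕ} (D : Set (EuclideanSpace ℝ (Fin n))) (hne : D.Nonempty)
    (hfin : D.Finite) (h0 : (0 : EuclideanSpace ℝ (Fin n)) ∉ D)
    (hproper : Submodule.span ℝ D ≠ (⊤ : Submodule ℝ (EuclideanSpace ℝ (Fin n))))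
    (hps : pspan D = (Submodule.span ℝ D : Set (EuclideanSpace ℝ (Fin n)))) :
    cmRel (⊤ : Submodule ℝ (EuclideanSpace ℝ (Fin n))) D = 0 := by
  classical
  -- Key: for every u there is d ∈ D with ⟪u, d⟫ ≥ 0.
  have key : ∀ u : EuclideanSpace ℝ (Fin n), ∃ d ∈ D, 0 ≤ ⟪u, d⟫ := by
    intro u
    by_contra h
    push_neg at h
    obtain ⟨d0, hd0⟩ := hne
    have hmem : -d0 ∈ pspan D := by
      rw [hps]
      exact neg_mem (Submodule.subset_span hd0)
    obtain ⟨k, d, c, hdD, hc, hsum⟩ := hmem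
    have h1 : 0 < ⟪u, -d0⟫ := by
      rw [inner_neg_right]; linarith [h d0 hd0]
    have h2 : ⟪u, -d0⟫ ≤ 0 := by
      rw [hsum, inner_sum]
      apply Finset.sum_nonpos
      intro i _
      rw [real_inner_smul_right]
      exact mul_nonpos_of_nonneg_of_nonpos (hc i) (le_of_lt (h (d i) (hdD i)))
    linarith
  -- every value of the sup is nonnegative
  have hnonneg : ∀ u : EuclideanSpace ℝ (Fin n),
      0 ≤ sSup ((fun d => ⟪u, d⟫ / ‖d‖) '' D) := by
    intro u
    obtain ⟨d, hdD, hd⟩ := key u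
    have hbdd : BddAbove ((fun d => ⟪u, d⟫ / ‖d‖) '' D) := (hfin.image _).bddAbove
    have h1 : (0 : ℝ) ≤ ⟪u, d⟫ / ‖d‖ := div_nonneg hd (norm_nonneg d)
    exact h1.trans (le_csSup hbdd ⟨d, hdD, rfl⟩)
  -- there is a unit vector orthogonal to D
  have hne_bot : (Submodule.span ℝ D)ᗮ ≠ ⊥ := by
    intro h
    exact hproper ((Submodule.orthogonal_eq_bot_iff).mp h)
  obtain ⟨w, hw_mem, hw_ne⟩ := (Submodule.ne_bot_iff _).mp hne_bot
  set u0 : EuclideanSpace ℝ (Fin n) := ‖w‖⁻¹ • w with hu0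
  have hwn : ‖w‖ ≠ 0 := norm_ne_zero_iff.mpr hw_ne
  have hu0norm : ‖u0‖ = 1 := by
    rw [hu0, norm_smul, norm_inv, norm_norm, inv_mul_cancel₀ hwn]
  have hu0orth : ∀ d ∈ D, ⟪u0, d⟫ = 0 := by
    intro d hd
    have := hw_mem d (Submodule.subset_span hd)
    rw [hu0, real_inner_smul_left, real_inner_comm, this, mul_zero]
  have himg : (fun d => ⟪u0, d⟫ / ‖d‖) '' D = {0} := by
    apply Set.eq_singleton_iff_nonempty_unique_mem.mpr
    constructor
    · exact hne.image _
    · rintro x ⟨d, hd, rfl⟩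
      simp [hu0orth d hd]
  have hval0 : sSup ((fun d => ⟪u0, d⟫ / ‖d‖) '' D) = 0 := by
    rw [himg, csSup_singleton]
  -- conclude
  unfold cmRel
  apply le_antisymm
  · apply csInf_le
    · exact ⟨0, by rintro x ⟨u, _, rfl⟩; exact hnonneg u⟩
    · exact ⟨u0, ⟨Submodule.mem_top, hu0norm⟩, hval0⟩
  · apply le_csInf
    · exact ⟨0, u0, ⟨Submodule.mem_top, hu0norm⟩, hval0⟩
    · rintro x ⟨u, _, rfl⟩; exact hnonneg u
end
end

section
/- Let D ⊆ ℝⁿ be a set consisting of exactly 2 nonzero vectors. Then either CM_D(D) = 1 or CM_D(D) < 0. -/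
open scoped RealInnerProductSpace

noncomputable section

lemma ratio_ge_neg_one {E : Type*} [NormedAddCommGroup E] [InnerProductSpace ℝ E]
    {u : E} (d : E) (hu : ‖u‖ = 1) : -1 ≤ ⟪u, d⟫ / ‖d‖ := by
  rcases eq_or_ne d 0 with rfl | hd
  · simp
  · rw [le_div_iff₀ (norm_pos_iff.mpr hd)]
    have h := abs_real_inner_le_norm u d
    rw [hu, one_mul] at h
    have := neg_abs_le ⟪u, d⟫
    nlinarith [abs_nonneg ⟪u, d⟫]

theorem stmt14 {n : ℕ} (D : Set (EuclideanSpace ℝ (Fin n)))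
    (h0 : (0 : EuclideanSpace ℝ (Fin n)) ∉ D) (hcard : D.ncard = 2) :
    cmRel (Submodule.span ℝ D) D = 1 ∨ cmRel (Submodule.span ℝ D) D < 0 := by
  obtain ⟨a, b, hab, rfl⟩ := Set.ncard_eq_two.mp hcard
  have ha : a ≠ 0 := fun h => h0 (h ▸ Set.mem_insert _ _)
  have hb : b ≠ 0 := fun h => h0 (h ▸ Set.mem_insert_of_mem _ rfl)
  have hna : (0:ℝ) < ‖a‖ := norm_pos_iff.mpr ha
  have hnb : (0:ℝ) < ‖b‖ := norm_pos_iff.mpr hb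
  set e1 : EuclideanSpace ℝ (Fin n) := ‖a‖⁻¹ • a with he1def
  set e2 : EuclideanSpace ℝ (Fin n) := ‖b‖⁻¹ • b with he2def
  have he1 : ‖e1‖ = 1 := by
    rw [he1def, norm_smul, norm_inv, norm_norm, inv_mul_cancel₀ hna.ne']
  have he2 : ‖e2‖ = 1 := by
    rw [he2def, norm_smul, norm_inv, norm_norm, inv_mul_cancel₀ hnb.ne']
  set L := Submodule.span ℝ ({a, b} : Set (EuclideanSpace ℝ (Fin n))) with hL
  have haL : a ∈ L := Submodule.subset_span (Set.mem_insert _ _)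
  have hbL : b ∈ L := Submodule.subset_span (Set.mem_insert_of_mem _ rfl)
  have he1L : e1 ∈ L := Submodule.smul_mem _ _ haL
  have he2L : e2 ∈ L := Submodule.smul_mem _ _ hbL
  -- ratios via normalized vectors
  have hra : ∀ u : EuclideanSpace ℝ (Fin n), ⟪u, a⟫ / ‖a‖ = ⟪u, e1⟫ := fun u => by
    rw [he1def, real_inner_smul_right, div_eq_inv_mul]
  have hrb : ∀ u : EuclideanSpace ℝ (Fin n), ⟪u, b⟫ / ‖b‖ = ⟪u, e2⟫ := fun u => by
    rw [he2def, real_inner_smul_right, div_eq_inv_mul]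
  -- boundedness below of the outer set
  have hbdd : BddBelow ((fun u => sSup ((fun d => ⟪u, d⟫ / ‖d‖) ''
      ({a, b} : Set (EuclideanSpace ℝ (Fin n))))) '' {u | u ∈ L ∧ ‖u‖ = 1}) := by
    refine ⟨-1, ?_⟩
    rintro x ⟨u, ⟨hu, hun⟩, rfl⟩
    simp only [Set.image_pair]
    rw [csSup_pair]
    exact le_trans (ratio_ge_neg_one a hun) le_sup_left
  by_cases hcol : e1 + e2 = 0
  · -- antiparallel case : cmRel = 1
    left
    have h2 : e2 = -e1 := by linear_combination (norm := abel) hcol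
    have hb_eq : b = (-(‖b‖ * ‖a‖⁻¹)) • a :=
      calc b = ‖b‖ • e2 := by
              rw [he2def, smul_smul, mul_inv_cancel₀ hnb.ne', one_smul]
        _ = (-(‖b‖ * ‖a‖⁻¹)) • a := by
              rw [h2, he1def, smul_neg, smul_smul, neg_smul]
    have hLa : L = Submodule.span ℝ ({a} : Set (EuclideanSpace ℝ (Fin n))) := by
      apply le_antisymm
      · rw [hL, Submodule.span_le]
        rintro x (rfl | rfl)
        · exact Submodule.subset_span rfl
        · rw [hb_eq]
          exact Submodule.smul_mem _ _ (Submodule.subset_span rfl)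
      · exact Submodule.span_mono (Set.singleton_subset_iff.mpr (Set.mem_insert _ _))
    have hval : ∀ u : EuclideanSpace ℝ (Fin n), u ∈ L → ‖u‖ = 1 →
        sSup ((fun d => ⟪u, d⟫ / ‖d‖) ''
          ({a, b} : Set (EuclideanSpace ℝ (Fin n)))) = 1 := by
      intro u huL hun
      rw [hLa, Submodule.mem_span_singleton] at huL
      obtain ⟨c, rfl⟩ := huL
      have hcn : |c| * ‖a‖ = 1 := by
        rw [← Real.norm_eq_abs, ← norm_smul]; exact hun
      have hv1 : ⟪c • a, a⟫ / ‖a‖ = c * ‖a‖ := by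
        rw [real_inner_smul_left, real_inner_self_eq_norm_sq]
        field_simp
      have hv2 : ⟪c • a, b⟫ / ‖b‖ = -(c * ‖a‖) := by
        rw [hrb, h2, inner_neg_right, ← hra, hv1]
      rw [Set.image_pair, hv1, hv2, csSup_pair, ← abs_eq_max_neg,
        abs_mul, abs_of_pos hna]
      exact hcn
    have hne : (1:ℝ) ∈ (fun u => sSup ((fun d => ⟪u, d⟫ / ‖d‖) ''
        ({a, b} : Set (EuclideanSpace ℝ (Fin n))))) '' {u | u ∈ L ∧ ‖u‖ = 1} :=
      ⟨e1, ⟨he1L, he1⟩, hval e1 he1L he1⟩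
    refine le_antisymm (csInf_le hbdd hne) (le_csInf ⟨1, hne⟩ ?_)
    rintro x ⟨u, ⟨hu, hun⟩, rfl⟩
    exact (hval u hu hun).ge
  · -- non-antiparallel case : cmRel < 0
    right
    set s : EuclideanSpace ℝ (Fin n) := e1 + e2 with hs
    have hsn : (0:ℝ) < ‖s‖ := norm_pos_iff.mpr hcol
    set u : EuclideanSpace ℝ (Fin n) := -(‖s‖⁻¹ • s) with hu
    have hun : ‖u‖ = 1 := by
      rw [hu, norm_neg, norm_smul, norm_inv, norm_norm, inv_mul_cancel₀ hsn.ne']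
    have huL : u ∈ L := Submodule.neg_mem _ (Submodule.smul_mem _ _
      (Submodule.add_mem _ he1L he2L))
    have hip : -1 < ⟪e1, e2⟫ := by
      have h := norm_add_sq_real e1 e2
      rw [he1, he2] at h
      have h2 : (0:ℝ) < ‖s‖ ^ 2 := by positivity
      rw [hs] at h2
      nlinarith
    have hv1 : ⟪u, e1⟫ < 0 := by
      rw [hu, hs, inner_neg_left, real_inner_smul_left, inner_add_left,
        real_inner_self_eq_norm_sq, he1]
      have h1 : (0:ℝ) < 1 + ⟪e2, e1⟫ := by
        rw [real_inner_comm]; linarith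
      have hpos : (0:ℝ) < ‖e1 + e2‖⁻¹ := by rw [← hs]; exact inv_pos.mpr hsn
      nlinarith
    have hv2 : ⟪u, e2⟫ < 0 := by
      rw [hu, hs, inner_neg_left, real_inner_smul_left, inner_add_left,
        real_inner_self_eq_norm_sq, he2]
      have h1 : (0:ℝ) < ⟪e1, e2⟫ + 1 := by linarith
      have hpos : (0:ℝ) < ‖e1 + e2‖⁻¹ := by rw [← hs]; exact inv_pos.mpr hsn
      nlinarith
    have hmem : sSup ((fun d => ⟪u, d⟫ / ‖d‖) ''
        ({a, b} : Set (EuclideanSpace ℝ (Fin n)))) ∈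
        (fun u => sSup ((fun d => ⟪u, d⟫ / ‖d‖) ''
          ({a, b} : Set (EuclideanSpace ℝ (Fin n))))) ''
        {u | u ∈ L ∧ ‖u‖ = 1} := ⟨u, ⟨huL, hun⟩, rfl⟩
    have hle := csInf_le hbdd hmem
    calc cmRel L ({a, b} : Set (EuclideanSpace ℝ (Fin n))) ≤ _ := hle
      _ < 0 := by
        rw [Set.image_pair, csSup_pair, hra, hrb]
        exact sup_lt_iff.mpr ⟨hv1, hv2⟩
end
end

section
/- Let D ⊆ ℝⁿ be a nonempty (possibly infinite) set of nonzero vectors whose radius Δ_D = sup_{d ∈ D} ‖d‖ satisfies 0 < Δ_D < ∞, and suppose pspan(D) = span(D). Let f : ℝⁿ → ℝ and x⁰ ∈ ℝⁿ, and suppose f(x⁰) ≤ f(x⁰ + d) for all d ∈ D. If f is differentiable with gradient ∇f Lipschitz continuous with constant L_∇f ≥ 0 on an open set containing the closed ball of radius Δ_D centered at x⁰, then ‖P_D ∇f(x⁰)‖ ≤ (1/2) · L_∇f · CM_D(D)⁻¹ · Δ_D, where P_D denotes the orthogonal projection onto span(D). -/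
open scoped RealInnerProductSpace

noncomputable section

lemma quadBound {E : Type*} [NormedAddCommGroup E] [InnerProductSpace ℝ E] [CompleteSpace E]
    {f : E → ℝ} {U : Set E} {L : ℝ}
    (hdiff : ∀ x ∈ U, DifferentiableAt ℝ f x)
    (hlip : ∀ x ∈ U, ∀ y ∈ U, ‖gradient f x - gradient f y‖ ≤ L * ‖x - y‖)
    {x0 d : E} (hseg : ∀ t ∈ Set.Icc (0:ℝ) 1, x0 + t • d ∈ U) :
    f (x0 + d) ≤ f x0 + ⟪gradient f x0, d⟫ + L / 2 * ‖d‖ ^ 2 := by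
  set G := gradient f x0 with hG
  have hx0U : x0 ∈ U := by simpa using hseg 0 (by norm_num)
  have hφ' : ∀ t ∈ Set.Icc (0:ℝ) 1,
      HasDerivAt (fun t : ℝ => f (x0 + t • d)) ⟪gradient f (x0 + t • d), d⟫ t := by
    intro t ht
    have hyU := hseg t ht
    have hF : HasFDerivAt f (InnerProductSpace.toDual ℝ E (gradient f (x0 + t • d)))
        (x0 + t • d) := (hdiff _ hyU).hasGradientAt.hasFDerivAt
    have hc : HasDerivAt (fun s : ℝ => x0 + s • d) d t := by
      simpa using ((hasDerivAt_id t).smul_const d).const_add x0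
    simpa [Function.comp_def] using hF.comp_hasDerivAt t hc
  have hB' : ∀ t : ℝ, HasDerivAt (fun t : ℝ => f x0 + ⟪G, d⟫ * t + L * ‖d‖ ^ 2 / 2 * t ^ 2)
      (⟪G, d⟫ + L * ‖d‖ ^ 2 / 2 * (2 * t)) t := by
    intro t
    have h1 : HasDerivAt (fun t : ℝ => ⟪G, d⟫ * t) ⟪G, d⟫ t := by
      simpa using (hasDerivAt_id t).const_mul ⟪G, d⟫
    have h2 : HasDerivAt (fun t : ℝ => L * ‖d‖ ^ 2 / 2 * t ^ 2)
        (L * ‖d‖ ^ 2 / 2 * (2 * t)) t := by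
      simpa using (hasDerivAt_pow 2 t).const_mul (L * ‖d‖ ^ 2 / 2)
    exact ((h1.const_add (f x0)).add h2)
  have bound : ∀ t ∈ Set.Ico (0:ℝ) 1,
      ⟪gradient f (x0 + t • d), d⟫ ≤ ⟪G, d⟫ + L * ‖d‖ ^ 2 / 2 * (2 * t) := by
    intro t ht
    have hyU := hseg t ⟨ht.1, ht.2.le⟩
    have h1 : ⟪gradient f (x0 + t • d) - G, d⟫ ≤ ‖gradient f (x0 + t • d) - G‖ * ‖d‖ :=
      real_inner_le_norm _ _
    have h2 : ‖gradient f (x0 + t • d) - G‖ ≤ L * ‖(x0 + t • d) - x0‖ := hlip _ hyU _ hx0U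
    have h3 : ‖(x0 + t • d) - x0‖ = t * ‖d‖ := by
      rw [add_sub_cancel_left, norm_smul, Real.norm_eq_abs, abs_of_nonneg ht.1]
    rw [h3] at h2
    have h4 := inner_sub_left (𝕜 := ℝ) (gradient f (x0 + t • d)) G d
    nlinarith [norm_nonneg d, norm_nonneg (gradient f (x0 + t • d) - G)]
  have key : ∀ x ∈ Set.Icc (0:ℝ) 1, f (x0 + x • d) ≤
      f x0 + ⟪G, d⟫ * x + L * ‖d‖ ^ 2 / 2 * x ^ 2 :=
    image_le_of_deriv_right_le_deriv_boundary
      (fun t ht => (hφ' t ht).continuousAt.continuousWithinAt)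
      (fun t ht => (hφ' t (Set.Ico_subset_Icc_self ht)).hasDerivWithinAt)
      (by simp)
      (fun t ht => (hB' t).continuousAt.continuousWithinAt)
      (fun t ht => (hB' t).hasDerivWithinAt)
      bound
  have := key 1 (by norm_num)
  simp only [one_smul, one_pow, mul_one] at this
  linarith

theorem stmt17 {n : ℕ} (D : Set (EuclideanSpace ℝ (Fin n))) (hne : D.Nonempty)
    (h0 : (0 : EuclideanSpace ℝ (Fin n)) ∉ D)
    (Δ : ℝ) (hbdd : BddAbove (norm '' D)) (hΔ : Δ = sSup (norm '' D)) (hΔpos : 0 < Δ)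
    (hps : pspan D = (Submodule.span ℝ D : Set (EuclideanSpace ℝ (Fin n))))
    (f : EuclideanSpace ℝ (Fin n) → ℝ) (x0 : EuclideanSpace ℝ (Fin n))
    (hdec : ∀ d ∈ D, f x0 ≤ f (x0 + d))
    (U : Set (EuclideanSpace ℝ (Fin n))) (hU : IsOpen U)
    (hball : Metric.closedBall x0 Δ ⊆ U)
    (L : ℝ) (hL : 0 ≤ L)
    (hdiff : ∀ x ∈ U, DifferentiableAt ℝ f x)
    (hlip : ∀ x ∈ U, ∀ y ∈ U, ‖gradient f x - gradient f y‖ ≤ L * ‖x - y‖) :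
    ‖(Submodule.orthogonalProjection (Submodule.span ℝ D) (gradient f x0) :
        EuclideanSpace ℝ (Fin n))‖ ≤
      (1 / 2) * L * (cmRel (Submodule.span ℝ D) D)⁻¹ * Δ := by
  classical
  set K : Submodule ℝ (EuclideanSpace ℝ (Fin n)) := Submodule.span ℝ D with hK
  have hdne : ∀ d ∈ D, d ≠ (0:EuclideanSpace ℝ (Fin n)) := fun d hd h => h0 (h ▸ hd)
  have hdnorm : ∀ d ∈ D, (0:ℝ) < ‖d‖ := fun d hd => norm_pos_iff.2 (hdne d hd)
  have hdΔ : ∀ d ∈ D, ‖d‖ ≤ Δ := fun d hd => hΔ ▸ le_csSup hbdd ⟨d, hd, rfl⟩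
  -- the function φ
  set φ : EuclideanSpace ℝ (Fin n) → ℝ := fun u => sSup ((fun d => ⟪u, d⟫ / ‖d‖) '' D) with hφ
  have himne : ∀ u : EuclideanSpace ℝ (Fin n), ((fun d => ⟪u, d⟫ / ‖d‖) '' D).Nonempty :=
    fun u => hne.image _
  have hbddφ : ∀ u : EuclideanSpace ℝ (Fin n), BddAbove ((fun d => ⟪u, d⟫ / ‖d‖) '' D) := by
    intro u
    refine ⟨‖u‖, ?_⟩
    rintro r ⟨d, hd, rfl⟩
    rw [div_le_iff₀ (hdnorm d hd)]
    exact real_inner_le_norm u d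
  have hφle : ∀ u : EuclideanSpace ℝ (Fin n), φ u ≤ ‖u‖ := by
    intro u
    refine csSup_le (himne u) ?_
    rintro r ⟨d, hd, rfl⟩
    rw [div_le_iff₀ (hdnorm d hd)]
    exact real_inner_le_norm u d
  have hφge : ∀ u : EuclideanSpace ℝ (Fin n), -‖u‖ ≤ φ u := by
    intro u
    obtain ⟨d, hd⟩ := hne
    refine le_trans ?_ (le_csSup (hbddφ u) ⟨d, hd, rfl⟩)
    rw [le_div_iff₀ (hdnorm d hd)]
    have h1 := abs_real_inner_le_norm u d
    have h2 := neg_abs_le (⟪u, d⟫ : ℝ)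
    linarith
  -- φ is 1-Lipschitz
  have hφlip1 : ∀ u v : EuclideanSpace ℝ (Fin n), φ u ≤ φ v + ‖u - v‖ := by
    intro u v
    refine csSup_le (himne u) ?_
    rintro r ⟨d, hd, rfl⟩
    have h1 : ⟪v, d⟫ / ‖d‖ ≤ φ v := le_csSup (hbddφ v) ⟨d, hd, rfl⟩
    have h2 : ⟪u - v, d⟫ / ‖d‖ ≤ ‖u - v‖ := by
      rw [div_le_iff₀ (hdnorm d hd)]; exact real_inner_le_norm _ _
    have h3 : ⟪u, d⟫ = ⟪v, d⟫ + ⟪u - v, d⟫ := by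
      rw [inner_sub_left]; ring
    show ⟪u, d⟫ / ‖d‖ ≤ φ v + ‖u - v‖
    rw [h3, add_div]
    linarith
  have hφcont : Continuous φ := by
    apply LipschitzWith.continuous (K := 1)
    apply LipschitzWith.of_dist_le_mul
    intro u v
    rw [Real.dist_eq, dist_eq_norm]
    simp only [NNReal.coe_one, one_mul]
    rw [abs_sub_le_iff]
    constructor
    · linarith [hφlip1 u v]
    · have := hφlip1 v u
      rw [norm_sub_rev] at this
      linarith
  -- the sphere in K
  set S : Set (EuclideanSpace ℝ (Fin n)) := {u : EuclideanSpace ℝ (Fin n) | u ∈ K ∧ ‖u‖ = 1} with hS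
  have hSne : S.Nonempty := by
    obtain ⟨d, hd⟩ := hne
    exact ⟨‖d‖⁻¹ • d, K.smul_mem _ (Submodule.subset_span hd),
      norm_smul_inv_norm (hdne d hd)⟩
  have hScompact : IsCompact S := by
    have : S = (K : Set (EuclideanSpace ℝ (Fin n))) ∩ Metric.sphere 0 1 := by
      ext u; simp [hS, Metric.mem_sphere, dist_zero_right]
    rw [this]
    exact (isCompact_sphere (0:EuclideanSpace ℝ (Fin n)) 1).inter_left (Submodule.closed_of_finiteDimensional K)
  -- φ is positive on S
  have hφpos : ∀ u ∈ S, 0 < φ u := by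
    rintro u ⟨huK, hu1⟩
    have hups : u ∈ pspan D := by rw [hps]; exact huK
    obtain ⟨k, dv, c, hdm, hcnn, hsum⟩ := hups
    have h1 : (1:ℝ) = ∑ i, c i * ⟪u, dv i⟫ := by
      have huu : ⟪u, u⟫ = (1:ℝ) := by
        rw [real_inner_self_eq_norm_sq, hu1]; norm_num
      calc (1:ℝ) = ⟪u, u⟫ := huu.symm
        _ = ⟪u, ∑ i, c i • dv i⟫ := by nth_rewrite 2 [hsum]; rfl
        _ = ∑ i, c i * ⟪u, dv i⟫ := by
            rw [inner_sum]
            exact Finset.sum_congr rfl fun i _ => real_inner_smul_right u (dv i) (c i)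
    have : ∃ i, 0 < c i * ⟪u, dv i⟫ := by
      by_contra hcon
      push_neg at hcon
      have : (∑ i, c i * ⟪u, dv i⟫) ≤ 0 := Finset.sum_nonpos fun i _ => hcon i
      linarith
    obtain ⟨i, hi⟩ := this
    have hci : 0 < ⟪u, dv i⟫ := by
      rcases lt_or_ge 0 ⟪u, dv i⟫ with h | h
      · exact h
      · exfalso
        have : c i * ⟪u, dv i⟫ ≤ 0 := mul_nonpos_of_nonneg_of_nonpos (hcnn i) h
        linarith
    have := le_csSup (hbddφ u) ⟨dv i, hdm i, rfl⟩
    have hpos : 0 < ⟪u, dv i⟫ / ‖dv i‖ := div_pos hci (hdnorm _ (hdm i))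
    linarith
  -- cmRel is positive
  have hcm : cmRel K D = sInf (φ '' S) := rfl
  obtain ⟨u0, hu0S, hu0min⟩ := hScompact.exists_isMinOn hSne hφcont.continuousOn
  have hcmpos : 0 < cmRel K D := by
    rw [hcm]
    have : φ u0 ≤ sInf (φ '' S) := by
      refine le_csInf (hSne.image φ) ?_
      rintro b ⟨v, hv, rfl⟩
      exact hu0min hv
    linarith [hφpos u0 hu0S]
  have hbddbelow : BddBelow (φ '' S) := by
    refine ⟨-1, ?_⟩
    rintro r ⟨v, ⟨hvK, hv1⟩, rfl⟩
    have := hφge v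
    rw [hv1] at this
    exact this
  -- main descent estimate
  set G : EuclideanSpace ℝ (Fin n) := gradient f x0 with hGdef
  set g : EuclideanSpace ℝ (Fin n) := (Submodule.orthogonalProjection K G : EuclideanSpace ℝ (Fin n)) with hg
  have hinner : ∀ d ∈ D, ⟪G, d⟫ = ⟪g, d⟫ := by
    intro d hd
    have horth : G - g ∈ Kᗮ := by
      rw [hg]; exact K.sub_starProjection_mem_orthogonal G
    have hdK : d ∈ K := Submodule.subset_span hd
    have : ⟪G - g, d⟫ = 0 := by
      rw [real_inner_comm]
      exact (Submodule.mem_orthogonal K _).1 horth d hdK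
    rw [inner_sub_left] at this
    linarith
  have hkey : ∀ d ∈ D, -⟪g, d⟫ ≤ L / 2 * ‖d‖ ^ 2 := by
    intro d hd
    have hseg : ∀ t ∈ Set.Icc (0:ℝ) 1, x0 + t • d ∈ U := by
      intro t ht
      apply hball
      rw [Metric.mem_closedBall, dist_eq_norm, add_sub_cancel_left, norm_smul,
        Real.norm_eq_abs, abs_of_nonneg ht.1]
      calc t * ‖d‖ ≤ 1 * ‖d‖ :=
            mul_le_mul_of_nonneg_right ht.2 (norm_nonneg d)
        _ = ‖d‖ := one_mul _
        _ ≤ Δ := hdΔ d hd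
    have h1 := quadBound hdiff hlip hseg
    have h2 := hdec d hd
    rw [← hGdef] at h1
    rw [hinner d hd] at h1
    linarith
  -- conclude
  show ‖g‖ ≤ 1 / 2 * L * (cmRel K D)⁻¹ * Δ
  rcases eq_or_ne g 0 with hg0 | hg0
  · rw [hg0, norm_zero]
    positivity
  · have hgpos : (0:ℝ) < ‖g‖ := norm_pos_iff.2 hg0
    set u : EuclideanSpace ℝ (Fin n) := -(‖g‖⁻¹ • g) with hu
    have huS : u ∈ S := by
      constructor
      · exact K.neg_mem (K.smul_mem _ (Submodule.orthogonalProjection K G).2)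
      · rw [hu, norm_neg]
        exact norm_smul_inv_norm hg0
    have hcmle : cmRel K D ≤ φ u := csInf_le hbddbelow ⟨u, huS, rfl⟩
    have hφu : φ u ≤ L / 2 * Δ / ‖g‖ := by
      refine csSup_le (himne u) ?_
      rintro r ⟨d, hd, rfl⟩
      have hiu : ⟪u, d⟫ = -(‖g‖⁻¹ * ⟪g, d⟫) := by
        rw [hu, inner_neg_left, real_inner_smul_left]
      show ⟪u, d⟫ / ‖d‖ ≤ L / 2 * Δ / ‖g‖
      rw [hiu]
      rw [div_le_div_iff₀ (hdnorm d hd) hgpos]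
      have h1 := hkey d hd
      have h2 := hdΔ d hd
      have h3 := hdnorm d hd
      have hinv : ‖g‖⁻¹ * ‖g‖ = 1 := inv_mul_cancel₀ (ne_of_gt hgpos)
      have hlhs : -(‖g‖⁻¹ * ⟪g, d⟫) * ‖g‖ = -⟪g, d⟫ := by
        field_simp
      rw [hlhs]
      have h5 : L / 2 * ‖d‖ * ‖d‖ ≤ L / 2 * ‖d‖ * Δ :=
        mul_le_mul_of_nonneg_left h2 (by positivity)
      linarith
    have hfinal : cmRel K D * ‖g‖ ≤ L / 2 * Δ := by
      have := le_trans hcmle hφu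
      rw [le_div_iff₀ hgpos] at this
      linarith
    have : ‖g‖ ≤ (cmRel K D)⁻¹ * (L / 2 * Δ) := by
      rw [le_inv_mul_iff₀ hcmpos]
      exact hfinal
    have heq : (cmRel K D)⁻¹ * (L / 2 * Δ) = 1 / 2 * L * (cmRel K D)⁻¹ * Δ := by ring
    linarith
end
end

section
/- Let D ⊆ ℝⁿ be a nonempty finite set of nonzero vectors with pspan(D) = span(D), and let u ∈ cV_D(D). Then span(A_D(D, u)) = span(D), where A_D(D, u) = {d ∈ D : ⟨u, d⟩/‖d‖ = CM_D(D)} is the active set for D at u relative to span(D). -/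
open scoped RealInnerProductSpace

noncomputable section

set_option maxHeartbeats 1000000 in
theorem stmt19 {n : ℕ} (D : Set (EuclideanSpace ℝ (Fin n))) (hne : D.Nonempty)
    (hfin : D.Finite) (h0 : (0 : EuclideanSpace ℝ (Fin n)) ∉ D)
    (hps : pspan D = (Submodule.span ℝ D : Set (EuclideanSpace ℝ (Fin n))))
    (u : EuclideanSpace ℝ (Fin n)) (hu : u ∈ cVRel (Submodule.span ℝ D) D) :
    Submodule.span ℝ
        {d ∈ D | ⟪u, d⟫ / ‖d‖ = cmRel (Submodule.span ℝ D) D} =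
      Submodule.span ℝ D := by
  classical
  set L := Submodule.span ℝ D with hL
  set γ := cmRel L D with hγdef
  obtain ⟨huL, hu1, husup⟩ := hu
  set f : EuclideanSpace ℝ (Fin n) → ℝ :=
    fun v => sSup ((fun d => ⟪v, d⟫ / ‖d‖) '' D) with hfdef
  have hnorm : ∀ d ∈ D, (0:ℝ) < ‖d‖ := by
    intro d hd
    rw [norm_pos_iff]
    rintro rfl; exact h0 hd
  have hfinI : ∀ v : EuclideanSpace ℝ (Fin n),
      ((fun d => ⟪v, d⟫ / ‖d‖) '' D).Finite := fun v => hfin.image _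
  have hneI : ∀ v : EuclideanSpace ℝ (Fin n),
      ((fun d => ⟪v, d⟫ / ‖d‖) '' D).Nonempty := fun v => hne.image _
  have hval_le : ∀ v : EuclideanSpace ℝ (Fin n), ∀ d ∈ D, ⟪v, d⟫ / ‖d‖ ≤ f v := by
    intro v d hd
    exact le_csSup (hfinI v).bddAbove ⟨d, hd, rfl⟩
  have hlow : ∀ v : EuclideanSpace ℝ (Fin n), ‖v‖ = 1 → ∀ d ∈ D,
      (-1:ℝ) ≤ ⟪v, d⟫ / ‖d‖ := by
    intro v hv d hd
    rw [le_div_iff₀ (hnorm d hd)]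
    have h1 := abs_real_inner_le_norm v d
    have h2 := neg_abs_le ⟪v, d⟫
    rw [hv] at h1
    nlinarith [hnorm d hd]
  have houterBdd : BddBelow ((fun v => f v) ''
      {v : EuclideanSpace ℝ (Fin n) | v ∈ L ∧ ‖v‖ = 1}) := by
    refine ⟨-1, ?_⟩
    rintro x ⟨v, ⟨hvL, hv1⟩, rfl⟩
    obtain ⟨d0, hd0⟩ := hne
    exact le_trans (hlow v hv1 d0 hd0) (hval_le v d0 hd0)
  have hγle : ∀ v : EuclideanSpace ℝ (Fin n), v ∈ L → ‖v‖ = 1 → γ ≤ f v := by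
    intro v hvL hv1
    exact csInf_le houterBdd ⟨v, ⟨hvL, hv1⟩, rfl⟩
  -- γ is positive
  have hγpos : 0 < γ := by
    have huP : u ∈ pspan D := by
      rw [hps]; exact huL
    obtain ⟨k, d, c, hdD, hc, hrep⟩ := huP
    have hinner : ⟪u, u⟫ = ∑ i, c i * ⟪u, d i⟫ := by
      nth_rewrite 2 [hrep]
      simp only [inner_sum, real_inner_smul_right]
    have hone : ⟪u, u⟫ = 1 := by
      rw [real_inner_self_eq_norm_sq, hu1]; norm_num
    by_contra hle
    push_neg at hle
    have hterm : ∀ i, c i * ⟪u, d i⟫ ≤ 0 := by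
      intro i
      have hdle : ⟪u, d i⟫ / ‖d i‖ ≤ γ :=
        (hval_le u (d i) (hdD i)).trans (le_of_eq husup)
      have hn := hnorm _ (hdD i)
      have h3 : ⟪u, d i⟫ ≤ γ * ‖d i‖ := (div_le_iff₀ hn).mp hdle
      have hX : ⟪u, d i⟫ ≤ 0 :=
        h3.trans (mul_nonpos_iff.mpr (Or.inr ⟨hle, hn.le⟩))
      exact mul_nonpos_iff.mpr (Or.inl ⟨hc i, hX⟩)
    have hsum : (∑ i, c i * ⟪u, d i⟫) ≤ 0 :=
      Finset.sum_nonpos (fun i _ => hterm i)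
    rw [hone] at hinner
    linarith
  -- main argument
  set A := {d ∈ D | ⟪u, d⟫ / ‖d‖ = γ} with hA
  set K := Submodule.span ℝ A with hK
  have hKL : K ≤ L := Submodule.span_mono (fun d hd => hd.1)
  by_contra hneq
  have hlt : K < L := lt_of_le_of_ne hKL hneq
  obtain ⟨x, hxL, hxK⟩ := SetLike.exists_of_lt hlt
  set w0 : EuclideanSpace ℝ (Fin n) :=
    x - (K.orthogonalProjectionOnto x : EuclideanSpace ℝ (Fin n)) with hw0def
  have hw0K : w0 ∈ Kᗮ := Submodule.sub_starProjection_mem_orthogonal (K := K) x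
  have hw0L : w0 ∈ L := Submodule.sub_mem L hxL (hKL (K.orthogonalProjectionOnto x).2)
  have hw0ne : w0 ≠ 0 := by
    intro h
    apply hxK
    have hx : x = (K.orthogonalProjectionOnto x : EuclideanSpace ℝ (Fin n)) := by
      rwa [sub_eq_zero] at h
    rw [hx]; exact (K.orthogonalProjectionOnto x).2
  set w : EuclideanSpace ℝ (Fin n) := if 0 ≤ ⟪u, w0⟫ then w0 else -w0 with hwdef
  have hwK : w ∈ Kᗮ := by
    rw [hwdef]; split
    · exact hw0K
    · exact Submodule.neg_mem _ hw0K
  have hwL : w ∈ L := by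
    rw [hwdef]; split
    · exact hw0L
    · exact Submodule.neg_mem _ hw0L
  have hwne : w ≠ 0 := by
    rw [hwdef]; split
    · exact hw0ne
    · simpa using hw0ne
  have huw : 0 ≤ ⟪u, w⟫ := by
    rw [hwdef]; split
    · assumption
    · rw [inner_neg_right]
      next h => linarith [not_le.mp h]
  -- choice of t
  set t0 : EuclideanSpace ℝ (Fin n) → ℝ := fun d =>
    if ⟪u, d⟫ / ‖d‖ = γ then 1
    else (γ - ⟪u, d⟫ / ‖d‖) / (|⟪w, d⟫ / ‖d‖| + 1) with ht0def
  have ht0pos : ∀ d ∈ D, 0 < t0 d := by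
    intro d hd
    by_cases h : ⟪u, d⟫ / ‖d‖ = γ
    · simp only [ht0def]
      rw [if_pos h]
      norm_num
    · have hle : ⟪u, d⟫ / ‖d‖ ≤ γ := (hval_le u d hd).trans (le_of_eq husup)
      have hlt' : ⟪u, d⟫ / ‖d‖ < γ := lt_of_le_of_ne hle h
      simp only [ht0def]
      rw [if_neg h]
      exact div_pos (by linarith)
        (add_pos_of_nonneg_of_pos (abs_nonneg _) one_pos)
  have hFne : hfin.toFinset.Nonempty := by
    simpa [Set.Finite.toFinset_nonempty] using hne
  set t := hfin.toFinset.inf' hFne t0 with htdef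
  have htpos : 0 < t := by
    rw [htdef, Finset.lt_inf'_iff]
    intro d hd
    exact ht0pos d (hfin.mem_toFinset.mp hd)
  have htle : ∀ d ∈ D, t ≤ t0 d := by
    intro d hd
    exact Finset.inf'_le _ (hfin.mem_toFinset.mpr hd)
  set v : EuclideanSpace ℝ (Fin n) := u + t • w with hvdef
  have hwpos : (0:ℝ) < ‖w‖ := norm_pos_iff.mpr hwne
  have hN2 : 1 < ‖v‖ ^ 2 := by
    have hexp : ‖v‖ ^ 2 = ‖u‖ ^ 2 + 2 * (t * ⟪u, w⟫) + t ^ 2 * ‖w‖ ^ 2 := by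
      rw [hvdef, @norm_add_sq_real, real_inner_smul_right, norm_smul]
      rw [Real.norm_eq_abs, abs_of_pos htpos]
      ring
    rw [hexp, hu1]
    nlinarith [mul_nonneg htpos.le huw, mul_pos (pow_pos htpos 2) (pow_pos hwpos 2)]
  have hNpos : (0:ℝ) < ‖v‖ := by nlinarith [norm_nonneg v]
  have hN1 : 1 < ‖v‖ := by nlinarith [norm_nonneg v]
  set uT : EuclideanSpace ℝ (Fin n) := ‖v‖⁻¹ • v with huTdef
  have huT1 : ‖uT‖ = 1 := by
    rw [huTdef, norm_smul, Real.norm_eq_abs, abs_inv, abs_of_pos hNpos,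
      inv_mul_cancel₀ hNpos.ne']
  have huTL : uT ∈ L := Submodule.smul_mem L _
    (Submodule.add_mem L huL (Submodule.smul_mem L _ hwL))
  have hkey : ∀ d ∈ D, ⟪uT, d⟫ / ‖d‖ < γ := by
    intro d hd
    have hdn := hnorm d hd
    have hip : ⟪uT, d⟫ / ‖d‖ = (⟪u, d⟫ / ‖d‖ + t * (⟪w, d⟫ / ‖d‖)) / ‖v‖ := by
      have h1 : ⟪uT, d⟫ = ‖v‖⁻¹ * (⟪u, d⟫ + t * ⟪w, d⟫) := by
        rw [huTdef, real_inner_smul_left, hvdef, inner_add_left, real_inner_smul_left]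
      rw [h1]
      have hd' : ‖d‖ ≠ 0 := hdn.ne'
      have hv' : ‖v‖ ≠ 0 := hNpos.ne'
      generalize (⟪u, d⟫ : ℝ) = a
      generalize (⟪w, d⟫ : ℝ) = b
      field_simp
    rw [hip]
    by_cases hact : ⟪u, d⟫ / ‖d‖ = γ
    · have hdA : d ∈ K := Submodule.subset_span ⟨hd, hact⟩
      have hwd : ⟪w, d⟫ = 0 := by
        rw [real_inner_comm]
        exact hwK d hdA
      rw [hact, hwd]
      simp only [zero_div, mul_zero, add_zero]
      exact div_lt_self hγpos hN1
    · have hltd : ⟪u, d⟫ / ‖d‖ < γ :=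
        lt_of_le_of_ne ((hval_le u d hd).trans (le_of_eq husup)) hact
      have ht0d : t0 d = (γ - ⟪u, d⟫ / ‖d‖) / (|⟪w, d⟫ / ‖d‖| + 1) := by
        simp only [ht0def]
        rw [if_neg hact]
      have habs : (0:ℝ) ≤ |⟪w, d⟫ / ‖d‖| := abs_nonneg _
      have hnum : ⟪u, d⟫ / ‖d‖ + t * (⟪w, d⟫ / ‖d‖) < γ := by
        have h1 : t * (⟪w, d⟫ / ‖d‖) ≤ t * |⟪w, d⟫ / ‖d‖| :=
          mul_le_mul_of_nonneg_left (le_abs_self _) htpos.le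
        have h2 : t ≤ (γ - ⟪u, d⟫ / ‖d‖) / (|⟪w, d⟫ / ‖d‖| + 1) := by
          rw [← ht0d]; exact htle d hd
        have h3 : t * (|⟪w, d⟫ / ‖d‖| + 1) ≤ γ - ⟪u, d⟫ / ‖d‖ :=
          (le_div_iff₀ (add_pos_of_nonneg_of_pos (abs_nonneg _) one_pos)).mp h2
        nlinarith
      rcases le_or_gt (⟪u, d⟫ / ‖d‖ + t * (⟪w, d⟫ / ‖d‖)) 0 with h | h
      · refine lt_of_le_of_lt ?_ hγpos
        exact div_nonpos_of_nonpos_of_nonneg h (norm_nonneg v)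
      · exact lt_of_le_of_lt (div_le_self h.le hN1.le) hnum
  obtain ⟨d, hd, hdval⟩ := (hneI uT).csSup_mem (hfinI uT)
  have hfu : f uT < γ := by
    have heq : f uT = ⟪uT, d⟫ / ‖d‖ := hdval.symm
    rw [heq]
    exact hkey d hd
  have := hγle uT huTL huT1
  linarith
end
end
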